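/- Let f be a submodular set function on a finite ground set 𝒩 and let f̂ be its Lovász extension. For every vector x ∈ [0,1]^𝒩 and every random subset D of 𝒩 whose marginals agree with x (i.e., Pr[u ∈ D] = x_u for every u ∈ 𝒩), it holds that f̂(x) ≤ E[f(D)]. -/

import Mathlib

open MeasureTheory Finset

/-- A set function on a finite ground set is submodular if the marginal contribution of an
element can only decrease when the set grows. -/
def Submodular {α : Type*} [Fintype α] [DecidableEq α] (f : Finset α → ℝ) : Prop :=
  ∀ S T : Finset α, S ⊆ T → ∀ u, u ∉ T →
    f (insert u T) - f T ≤ f (insert u S) - f S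

section LovaszAux

variable {α : Type*} [Fintype α] [DecidableEq α]

open Classical in
/-- The set of elements coming (weakly) before `u` in the linear order obtained by sorting by
decreasing `x`-value, with ties broken by the injection `e`. -/
noncomputable def lovP (x : α → ℝ) (e : α → ℕ) (u : α) : Finset α :=
  Finset.univ.filter fun v => x u < x v ∨ (x v = x u ∧ e v ≤ e u)

/-- The marginal value of `u` with respect to the prefix chain. -/
noncomputable def lovW (f : Finset α → ℝ) (x : α → ℝ) (e : α → ℕ) (u : α) : ℝ :=
  f (lovP x e u) - f ((lovP x e u).erase u)

lemma mem_lovP {x : α → ℝ} {e : α → ℕ} {u v : α} :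
    v ∈ lovP x e u ↔ x u < x v ∨ (x v = x u ∧ e v ≤ e u) := by
  classical simp [lovP]

lemma self_mem_lovP {x : α → ℝ} {e : α → ℕ} (u : α) : u ∈ lovP x e u :=
  mem_lovP.mpr (Or.inr ⟨rfl, le_rfl⟩)

lemma x_le_of_mem_lovP {x : α → ℝ} {e : α → ℕ} {u v : α} (h : v ∈ lovP x e u) :
    x u ≤ x v := by
  rcases mem_lovP.mp h with h | h
  · exact h.le
  · exact h.1.ge

lemma lovP_antisymm {x : α → ℝ} {e : α → ℕ} (he : Function.Injective e) {u v : α}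
    (h1 : v ∈ lovP x e u) (h2 : u ∈ lovP x e v) : u = v := by
  rcases mem_lovP.mp h1 with h1 | h1 <;> rcases mem_lovP.mp h2 with h2 | h2
  · exact absurd (h1.trans h2) (lt_irrefl _)
  · exact absurd h1 (by rw [h2.1]; exact lt_irrefl _)
  · exact absurd h2 (by rw [h1.1]; exact lt_irrefl _)
  · exact he (le_antisymm h2.2 h1.2)

lemma lovP_exists_top (x : α → ℝ) (e : α → ℕ) {S : Finset α} (hS : S.Nonempty) :
    ∃ m ∈ S, ∀ v ∈ S, v ∈ lovP x e m := by
  obtain ⟨m0, hm0, hmin⟩ := S.exists_min_image x hS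
  obtain ⟨m, hmT, hmax⟩ := (S.filter fun v => x v = x m0).exists_max_image e
    ⟨m0, Finset.mem_filter.mpr ⟨hm0, rfl⟩⟩
  have hxm : x m = x m0 := (Finset.mem_filter.mp hmT).2
  refine ⟨m, (Finset.mem_filter.mp hmT).1, ?_⟩
  intro v hv
  rcases lt_or_eq_of_le (hmin v hv) with h | h
  · exact mem_lovP.mpr (Or.inl (by rw [hxm]; exact h))
  · exact mem_lovP.mpr (Or.inr ⟨by rw [hxm, ← h],
      hmax v (Finset.mem_filter.mpr ⟨hv, h.symm⟩)⟩)

/-- Claim B: for every set `S`, `f ∅ + ∑_{u ∈ S} w u ≤ f S` (submodularity). -/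
lemma lovW_sum_le {f : Finset α → ℝ} (hsub : Submodular f) (x : α → ℝ) {e : α → ℕ}
    (he : Function.Injective e) (S : Finset α) :
    f ∅ + ∑ u ∈ S, lovW f x e u ≤ f S := by
  induction S using Finset.strongInduction with
  | _ S ih =>
    rcases S.eq_empty_or_nonempty with rfl | hS
    · simp
    · obtain ⟨m, hmS, hmax⟩ := lovP_exists_top x e hS
      have hsubset : S.erase m ⊆ (lovP x e m).erase m := by
        intro v hv
        obtain ⟨hne, hvS⟩ := Finset.mem_erase.mp hv
        exact Finset.mem_erase.mpr ⟨hne, hmax v hvS⟩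
      have hkey := hsub (S.erase m) ((lovP x e m).erase m) hsubset m
        (Finset.notMem_erase m _)
      rw [Finset.insert_erase (self_mem_lovP m), Finset.insert_erase hmS] at hkey
      have ihm := ih (S.erase m) (Finset.erase_ssubset hmS)
      have hsum := Finset.add_sum_erase S (lovW f x e) hmS
      have hw : lovW f x e m = f (lovP x e m) - f ((lovP x e m).erase m) := rfl
      linarith

/-- Claim A: on initial segments of the order, the bound of Claim B is an equality. -/
lemma lovW_sum_initial (f : Finset α → ℝ) (x : α → ℝ) {e : α → ℕ}
    (he : Function.Injective e) (A : Finset α) (hinit : ∀ u ∈ A, lovP x e u ⊆ A) :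
    f A = f ∅ + ∑ u ∈ A, lovW f x e u := by
  induction A using Finset.strongInduction with
  | _ A ih =>
    rcases A.eq_empty_or_nonempty with rfl | hA
    · simp
    · obtain ⟨m, hmA, hmax⟩ := lovP_exists_top x e hA
      have hAP : A = lovP x e m :=
        Finset.Subset.antisymm (fun v hv => hmax v hv) (hinit m hmA)
      have hQinit : ∀ u ∈ A.erase m, lovP x e u ⊆ A.erase m := by
        intro u hu v hv
        obtain ⟨hune, huA⟩ := Finset.mem_erase.mp hu
        refine Finset.mem_erase.mpr ⟨?_, hinit u huA hv⟩
        rintro rfl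
        exact hune (lovP_antisymm he (hmax u huA) hv).symm
      have ihQ := ih (A.erase m) (Finset.erase_ssubset hmA) hQinit
      have hsum := Finset.add_sum_erase A (lovW f x e) hmA
      have hfA : f A = f (A.erase m) + lovW f x e m := by
        rw [hAP]
        have hw : lovW f x e m = f (lovP x e m) - f ((lovP x e m).erase m) := rfl
        linarith
      linarith

end LovaszAux

/-- integrability of the step function. -/
lemma step_intervalIntegrable (a c : ℝ) :
    IntervalIntegrable (fun lam => if lam ≤ a then c else 0) volume 0 1 := by
  have h : (fun lam : ℝ => if lam ≤ a then c else 0)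
      = (Set.Iic a).indicator (fun _ => c) := by
    funext lam
    simp [Set.indicator_apply, Set.mem_Iic]
  rw [h, intervalIntegrable_iff]
  exact (MeasureTheory.integrableOn_const
    ((by rw [Set.uIoc_of_le zero_le_one, Real.volume_Ioc]; exact ENNReal.ofReal_ne_top))).indicator measurableSet_Iic

/-- value of the integral of the step function. -/
lemma step_integral (a c : ℝ) (h0 : 0 ≤ a) (h1 : a ≤ 1) :
    (∫ lam in (0:ℝ)..1, if lam ≤ a then c else 0) = c * a := by
  have h : (fun lam : ℝ => if lam ≤ a then c else 0)
      = (Set.Iic a).indicator (fun _ => c) := by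
    funext lam
    simp [Set.indicator_apply, Set.mem_Iic]
  rw [h, intervalIntegral.integral_of_le zero_le_one,
    MeasureTheory.setIntegral_indicator measurableSet_Iic]
  rw [Set.Ioc_inter_Iic, min_eq_right h1, MeasureTheory.setIntegral_const,
    Real.volume_real_Ioc, smul_eq_mul, max_eq_left (by linarith), sub_zero,
    mul_comm]

/-- the Lovász extension `f̂(x) = ∫₀¹ f(T_λ(x)) dλ` of a submodular function `f`
lower bounds `E[f(D)]` for any random set `D` (given by a probability mass function `p` on
subsets) whose marginals agree with `x`. -/
theorem stmt1 {α : Type*} [Fintype α] [DecidableEq α]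
    (f : Finset α → ℝ) (hsub : Submodular f)
    (x : α → ℝ) (hx : ∀ u, x u ∈ Set.Icc (0 : ℝ) 1)
    (p : Finset α → ℝ) (hp : ∀ S, 0 ≤ p S) (hp1 : ∑ S : Finset α, p S = 1)
    (hmarg : ∀ u, (∑ S : Finset α, if u ∈ S then p S else 0) = x u) :
    (∫ lam in (0 : ℝ)..1, f (Finset.univ.filter (fun u : α => lam ≤ x u)))
      ≤ ∑ S : Finset α, p S * f S := by
  classical
  set e : α → ℕ := fun u => ((Fintype.equivFin α) u : ℕ) with he_def
  have he : Function.Injective e := by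
    intro u v huv
    exact (Fintype.equivFin α).injective (Fin.val_injective huv)
  set w : α → ℝ := lovW f x e with hw_def
  -- Step 1: the integrand equals a step-function sum, for every lam.
  have h1 : ∀ lam : ℝ, f (Finset.univ.filter (fun u : α => lam ≤ x u))
      = f ∅ + ∑ u : α, (if lam ≤ x u then w u else 0) := by
    intro lam
    have hinit : ∀ u ∈ Finset.univ.filter (fun u : α => lam ≤ x u),
        lovP x e u ⊆ Finset.univ.filter (fun u : α => lam ≤ x u) := by
      intro u hu v hv
      have hxu : lam ≤ x u := (Finset.mem_filter.mp hu).2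
      exact Finset.mem_filter.mpr ⟨Finset.mem_univ v, hxu.trans (x_le_of_mem_lovP hv)⟩
    rw [lovW_sum_initial f x he _ hinit, Finset.sum_filter]
  -- Step 2: compute the LHS integral.
  have hL : (∫ lam in (0 : ℝ)..1, f (Finset.univ.filter (fun u : α => lam ≤ x u)))
      = f ∅ + ∑ u : α, w u * x u := by
    have hsum_int : ∀ s : Finset α,
        IntervalIntegrable (fun lam => ∑ u ∈ s, if lam ≤ x u then w u else 0) volume 0 1 := by
      intro s
      induction s using Finset.induction with
      | empty => simp [intervalIntegrable_const]
      | insert _ _ h ih =>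
        simp only [Finset.sum_insert h]
        exact (step_intervalIntegrable _ _).add ih
    simp only [h1]
    rw [intervalIntegral.integral_add intervalIntegrable_const (hsum_int Finset.univ),
      intervalIntegral.integral_finset_sum
        (fun u _ => step_intervalIntegrable (x u) (w u))]
    simp only [intervalIntegral.integral_const, sub_zero, one_smul]
    congr 1
    exact Finset.sum_congr rfl fun u _ => step_integral (x u) (w u) (hx u).1 (hx u).2
  -- Step 3: lower bound the RHS.
  have hR : f ∅ + ∑ u : α, w u * x u ≤ ∑ S : Finset α, p S * f S := by
    have hB : ∀ S : Finset α, p S * (f ∅ + ∑ u ∈ S, w u) ≤ p S * f S := fun S =>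
      mul_le_mul_of_nonneg_left (lovW_sum_le hsub x he S) (hp S)
    calc f ∅ + ∑ u : α, w u * x u
        = ∑ S : Finset α, p S * (f ∅ + ∑ u ∈ S, w u) := by
          have hswap : ∑ S : Finset α, p S * (∑ u ∈ S, w u)
              = ∑ u : α, w u * x u := by
            have hstep : ∀ S : Finset α, p S * (∑ u ∈ S, w u)
                = ∑ u : α, (if u ∈ S then p S else 0) * w u := by
              intro S
              have hite : ∀ u : α, (if u ∈ S then p S else 0) * w u
                  = if u ∈ S then p S * w u else 0 := by
                intro u; split <;> simp
              simp only [hite]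
              rw [← Finset.sum_filter, Finset.filter_mem_eq_inter, Finset.univ_inter,
                Finset.mul_sum]
            simp only [hstep]
            rw [Finset.sum_comm]
            refine Finset.sum_congr rfl fun u _ => ?_
            rw [← Finset.sum_mul, hmarg u, mul_comm]
          simp only [mul_add]
          rw [Finset.sum_add_distrib, ← Finset.sum_mul, hp1, one_mul, hswap]
      _ ≤ ∑ S : Finset α, p S * f S := Finset.sum_le_sum fun S _ => hB S
  rw [hL]
  exact hR
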